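/- Let G be a 3-regular graph on 2n vertices, with 45·2^d/d ≤ 2n ≤ 50·2^d/d, satisfying the expansion property that |N(S)| ≥ 0.18|S| for all S ⊆ V(G) with |S| ≤ n. Then for all sufficiently large d, G is not a minor of the hypercube Q_d. -/

import Mathlib

open Finset

/-- The `d`-dimensional hypercube graph. -/
def hypercube (d : ℕ) : SimpleGraph (Fin d → Bool) where
  Adj x y := (Finset.univ.filter fun i => x i ≠ y i).card = 1
  symm := ⟨by intro x y h; simpa [ne_comm] using h⟩
  loopless := ⟨by intro x h; simp at h⟩

/-- `H` is a minor of `G` (branch-set formulation). -/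
def IsMinor {α β : Type*} (H : SimpleGraph α) (G : SimpleGraph β) : Prop :=
  ∃ B : α → Set β,
    (∀ v, (B v).Nonempty) ∧
    (∀ v, (G.induce (B v)).Connected) ∧
    (Pairwise fun u v => Disjoint (B u) (B v)) ∧
    (∀ u v, H.Adj u v → ∃ a ∈ B u, ∃ b ∈ B v, G.Adj a b)

/-- External neighbourhood. -/
def extNbhd {α : Type*} (G : SimpleGraph α) (S : Set α) : Set α :=
  {w | w ∉ S ∧ ∃ v ∈ S, G.Adj v w}

lemma hyper_adj {d : ℕ} {x y : Fin d → Bool} (h : (hypercube d).Adj x y) :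
    hammingDist x y = 1 := h

lemma walk_hamming {d : ℕ} {x y : Fin d → Bool} (p : (hypercube d).Walk x y) :
    hammingDist x y ≤ p.length := by
  induction p with
  | nil => simp [hammingDist_self]
  | @cons u v w h q ih =>
      have ht := hammingDist_triangle u v w
      have h1 := hyper_adj h
      rw [SimpleGraph.Walk.length_cons]
      omega

lemma conn_hamming {d : ℕ} {s : Set (Fin d → Bool)}
    (hc : ((hypercube d).induce s).Connected) {a b : Fin d → Bool}
    (ha : a ∈ s) (hb : b ∈ s) :
    hammingDist a b + 1 ≤ (Set.toFinite s).toFinset.card := by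
  classical
  have hr : ((hypercube d).induce s).Reachable ⟨a, ha⟩ ⟨b, hb⟩ := hc.preconnected _ _
  have hfin : Fintype ↥s := (Set.toFinite s).fintype
  obtain ⟨w⟩ := hr
  set p := w.toPath with hp
  have hlen : p.1.length < Fintype.card ↥s := p.2.length_lt
  let f : ((hypercube d).induce s) →g (hypercube d) := ⟨Subtype.val, fun h => h⟩
  have h2 : hammingDist a b ≤ p.1.length := by
    have := walk_hamming (p.1.map f)
    rwa [SimpleGraph.Walk.length_map] at this
  have hcard : (Set.toFinite s).toFinset.card = Fintype.card ↥s := by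
    rw [Set.Finite.card_toFinset]
  omega

lemma ball_bound {d : ℕ} {α : Type} [Fintype α] (x : α → (Fin d → Bool))
    (hxinj : Function.Injective x) (c : Fin d → Bool) (r : ℕ) :
    (univ.filter fun v => hammingDist c (x v) ≤ r).card
      ≤ ∑ j ∈ range (r+1), d.choose j := by
  classical
  have h : (univ.filter fun v => hammingDist c (x v) ≤ r).card
      ≤ ((range (r+1)).biUnion fun j => Finset.powersetCard j (univ : Finset (Fin d))).card := by
    apply Finset.card_le_card_of_injOn (fun v => univ.filter fun i => c i ≠ x v i)
    · intro v hv
      simp only [Finset.mem_coe, mem_filter, mem_univ, true_and] at hv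
      simp only [Finset.mem_coe, mem_biUnion, mem_range, Finset.mem_powersetCard]
      exact ⟨hammingDist c (x v), Nat.lt_succ_of_le hv, Finset.subset_univ _, rfl⟩
    · intro u hu v hv he
      apply hxinj
      funext i
      by_cases hci : c i ≠ x u i
      · have : i ∈ univ.filter fun i => c i ≠ x v i := by
          have hm : i ∈ univ.filter fun i => c i ≠ x u i := by simpa using hci
          simpa only [he] using hm
        simp only [mem_filter] at this
        revert hci this; cases c i <;> cases x u i <;> cases x v i <;> simp
      · have hci' : x u i = c i := by revert hci; cases c i <;> cases x u i <;> simp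
        have : i ∉ univ.filter fun i => c i ≠ x v i := by
          have hm : i ∉ univ.filter fun i => c i ≠ x u i := by simpa using hci
          simpa only [he] using hm
        simp only [mem_filter, mem_univ, true_and, not_not] at this
        rw [hci', this]
  calc _ ≤ _ := h
    _ ≤ ∑ j ∈ range (r+1), (Finset.powersetCard j (univ : Finset (Fin d))).card :=
        Finset.card_biUnion_le
    _ = _ := by simp

lemma chernoff (d k : ℕ) (hk : k ≤ d) :
    ((∑ j ∈ range (k+1), d.choose j : ℕ) : ℝ) * (12/13)^k ≤ (25/13)^d := by
  have h1 : ((∑ j ∈ range (k+1), d.choose j : ℕ) : ℝ) * (12/13)^k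
      ≤ ∑ j ∈ range (k+1), (d.choose j : ℝ) * (12/13)^j := by
    push_cast
    rw [Finset.sum_mul]
    apply Finset.sum_le_sum
    intro j hj
    have : ((12:ℝ)/13)^k ≤ (12/13)^j := by
      apply pow_le_pow_of_le_one (by norm_num) (by norm_num)
      exact Nat.lt_succ_iff.mp (mem_range.mp hj)
    have hc : (0:ℝ) ≤ (d.choose j : ℝ) := by positivity
    nlinarith
  have h2 : ∑ j ∈ range (k+1), (d.choose j : ℝ) * (12/13)^j
      ≤ ∑ j ∈ range (d+1), (d.choose j : ℝ) * (12/13)^j := by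
    apply Finset.sum_le_sum_of_subset_of_nonneg
    · exact Finset.range_subset_range.mpr (by omega)
    · intro j _ _; positivity
  have h3 : ∑ j ∈ range (d+1), (d.choose j : ℝ) * (12/13)^j = (25/13)^d := by
    rw [show ((25:ℝ)/13) = 12/13 + 1 by norm_num]
    rw [add_pow]
    apply Finset.sum_congr rfl
    intro j _; ring
  linarith

lemma chernoff' (d k : ℕ) (hk : k ≤ d) :
    ((∑ j ∈ range (k+1), d.choose j : ℕ) : ℝ) ≤ (25/13)^d * (13/12)^k := by
  have h := chernoff d k hk
  have hpos : (0:ℝ) < (12/13)^k := by positivity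
  rw [← mul_le_mul_iff_of_pos_right hpos]
  calc ((∑ j ∈ range (k+1), d.choose j : ℕ) : ℝ) * (12/13)^k
      ≤ (25/13)^d := h
    _ = (25/13)^d * ((13/12)^k * (12/13)^k) := by
        rw [← mul_pow]
        norm_num
    _ = (25/13)^d * (13/12)^k * (12/13)^k := by ring

lemma Vsmall : ∃ D : ℕ, ∀ d ≥ D,
    ((∑ j ∈ range (12*d/25+1), d.choose j : ℕ) : ℝ) * d ≤ 0.45 * 2^d := by
  set q : ℝ := (25/13)^25 * (13/12)^12 with hq
  have hqlt : q / 2^25 < 1 := by rw [hq]; norm_num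
  have hq0 : 0 ≤ q / 2^25 := by positivity
  have htend := tendsto_pow_const_mul_const_pow_of_abs_lt_one 25
    (r := q / 2^25) (by rw [abs_of_nonneg hq0]; exact hqlt)
  have hev : ∀ᶠ d : ℕ in Filter.atTop,
      (d:ℝ)^25 * (q/2^25)^d ≤ (0.45:ℝ)^25 := by
    have h45 : (0:ℝ) < (0.45:ℝ)^25 := by positivity
    exact htend.eventually_le_const h45
  obtain ⟨D, hD⟩ := Filter.eventually_atTop.mp hev
  refine ⟨D, fun d hd => ?_⟩
  set k := 12*d/25 with hk
  have hkd : k ≤ d := by omega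
  have hW := chernoff' d k hkd
  set W : ℝ := ((∑ j ∈ range (k+1), d.choose j : ℕ) : ℝ) with hWdef
  have hW0 : 0 ≤ W := by positivity
  have hd0 : (0:ℝ) ≤ d := by positivity
  have key : (W * d)^25 ≤ (0.45 * 2^d)^25 := by
    have h25k : 25 * k ≤ 12 * d := by omega
    have h1 : (W * d)^25 ≤ ((25/13)^d * (13/12)^k * d)^25 := by
      apply pow_le_pow_left₀ (by positivity)
      have := mul_le_mul_of_nonneg_right hW hd0
      linarith
    have h2 : ((25/13:ℝ)^d * (13/12)^k * d)^25 = (25/13)^(25*d) * (13/12)^(25*k) * d^25 := by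
      rw [mul_pow, mul_pow, ← pow_mul, ← pow_mul]; ring_nf
    have h3 : ((13/12:ℝ))^(25*k) ≤ (13/12)^(12*d) :=
      pow_le_pow_right₀ (by norm_num) h25k
    have hqd : (25/13:ℝ)^(25*d) * (13/12)^(12*d) = q^d := by
      rw [hq, mul_pow, pow_mul, pow_mul]
    have h4 : (25/13:ℝ)^(25*d) * (13/12)^(12*d) * d^25 = d^25 * (q/2^25)^d * (2^25)^d := by
      rw [hqd, mul_assoc, ← mul_pow, div_mul_cancel₀ _ (by positivity : ((2:ℝ)^25) ≠ 0)]
      ring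
    have h5 : (d:ℝ)^25 * (q/2^25)^d * (2^25)^d ≤ (0.45:ℝ)^25 * (2^25)^d := by
      apply mul_le_mul_of_nonneg_right (hD d hd) (by positivity)
    have h6 : ((0.45:ℝ) * 2^d)^25 = (0.45:ℝ)^25 * (2^25)^d := by
      rw [mul_pow, ← pow_mul, ← pow_mul, show d*25 = 25*d by ring]
    have h7 : ((25/13:ℝ)^d * (13/12)^k * d)^25 ≤ (0.45:ℝ)^25 * (2^25)^d := by
      rw [h2]
      calc (25/13:ℝ)^(25*d) * (13/12)^(25*k) * d^25
          ≤ (25/13)^(25*d) * (13/12)^(12*d) * d^25 := by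
            exact mul_le_mul_of_nonneg_right
              (mul_le_mul_of_nonneg_left h3 (by positivity)) (by positivity)
        _ = d^25 * (q/2^25)^d * (2^25)^d := h4
        _ ≤ _ := h5
    rw [h6]
    exact le_trans h1 h7
  exact le_of_pow_le_pow_left₀ (n := 25) (by norm_num) (by positivity) key
set_option maxHeartbeats 1000000 in
theorem stmt_14 :
    ∃ D : ℕ, ∀ d ≥ D, ∀ (n : ℕ) (α : Type) (_ : Fintype α) (G : SimpleGraph α)
      (_ : DecidableRel G.Adj),
      Fintype.card α = 2 * n →
      (∀ v, G.degree v = 3) →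
      (45 * 2 ^ d / d : ℝ) ≤ (2 * n : ℝ) → (2 * n : ℝ) ≤ (50 * 2 ^ d / d : ℝ) →
      (∀ S : Set α, Nat.card S ≤ n →
        (0.18 : ℝ) * (Nat.card S : ℝ) ≤ (Nat.card (extNbhd G S) : ℝ)) →
      ¬ IsMinor G (hypercube d) := by
  classical
  obtain ⟨D0, hD0⟩ := Vsmall
  refine ⟨max D0 1, fun d hd n α instF G instD hcard hdeg hlow hupp hexp hminor => ?_⟩
  obtain ⟨B, hBne, hBconn, hBdisj, hBadj⟩ := hminor
  have hd1 : 1 ≤ d := le_trans (le_max_right _ _) hd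
  have hdR : (1:ℝ) ≤ (d:ℝ) := by exact_mod_cast hd1
  have hdpos : (0:ℝ) < d := by linarith
  have hpow : ((2:ℝ))^d ≤ (2*n) * d / 45 := by
    rw [div_le_iff₀ hdpos] at hlow
    rw [le_div_iff₀ (by norm_num : (0:ℝ) < 45)]
    push_cast at hlow ⊢
    linarith
  have hdle : (d:ℝ) ≤ 2^d := by exact_mod_cast (Nat.lt_two_pow_self (n := d)).le
  have hn45 : (45:ℝ) ≤ 2*(n:ℝ) := by
    have h45 : (45:ℝ) ≤ 45 * 2^d / d := by
      rw [le_div_iff₀ hdpos]; nlinarith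
    push_cast at hlow
    linarith
  have hnpos : (0:ℝ) < n := by linarith
  -- representatives
  set x : α → (Fin d → Bool) := fun v => (hBne v).some with hxdef
  have hx : ∀ v, x v ∈ B v := fun v => (hBne v).some_mem
  have hxinj : Function.Injective x := by
    intro u v huv
    by_contra hne'
    exact Set.disjoint_left.mp (hBdisj hne') (hx u) (huv ▸ hx v)
  -- branch set finsets
  set bF : α → Finset (Fin d → Bool) := fun v => (Set.toFinite (B v)).toFinset with hbFdef
  have hbsum : ∑ v, (bF v).card ≤ 2^d := by
    have hdisjF : ∀ u ∈ (univ : Finset α), ∀ v ∈ univ, u ≠ v → Disjoint (bF u) (bF v) := by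
      intro u _ v _ huv
      simp only [hbFdef, Set.Finite.disjoint_toFinset]
      exact hBdisj huv
    calc ∑ v, (bF v).card = (univ.biUnion bF).card := (Finset.card_biUnion hdisjF).symm
      _ ≤ Fintype.card (Fin d → Bool) := Finset.card_le_univ _
      _ = 2^d := by simp
  -- edge distance bound
  have hedge : ∀ v w, G.Adj v w → hammingDist (x v) (x w) ≤ (bF v).card + (bF w).card := by
    intro v w hvw
    obtain ⟨a, ha, bb, hbb, hab⟩ := hBadj v w hvw
    have h1 : hammingDist (x v) a + 1 ≤ (bF v).card := conn_hamming (hBconn v) (hx v) ha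
    have h2 : hammingDist bb (x w) + 1 ≤ (bF w).card := conn_hamming (hBconn w) hbb (hx w)
    have h3 := hyper_adj hab
    have t1 := hammingDist_triangle (x v) a (x w)
    have t2 := hammingDist_triangle a bb (x w)
    omega
  -- adjacency pair set and sums
  set AP : Finset (α × α) := univ.filter (fun p => G.Adj p.1 p.2) with hAPdef
  have hsplit1 : ∀ f : α → ℕ, ∑ p ∈ AP, f p.1 = ∑ v, 3 * f v := by
    intro f
    rw [hAPdef, Finset.sum_filter, Fintype.sum_prod_type]
    apply Finset.sum_congr rfl
    intro v _
    have hdv : (univ.filter (fun w => G.Adj v w)).card = 3 := by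
      rw [← SimpleGraph.neighborFinset_eq_filter]; exact hdeg v
    show (∑ w : α, if G.Adj v w then f v else 0) = 3 * f v
    rw [← Finset.sum_filter, Finset.sum_const, hdv, smul_eq_mul, mul_comm]
  have hsplit2 : ∀ f : α → ℕ, ∑ p ∈ AP, f p.2 = ∑ v, 3 * f v := by
    intro f
    rw [hAPdef, Finset.sum_filter, Fintype.sum_prod_type]
    rw [Finset.sum_comm]
    apply Finset.sum_congr rfl
    intro w _
    have hfilter : (univ.filter (fun v => G.Adj v w)) = (univ.filter (fun v => G.Adj w v)) := by
      apply Finset.filter_congr; intro v _; simp [G.adj_comm]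
    have hdv : (univ.filter (fun v => G.Adj v w)).card = 3 := by
      rw [hfilter, ← SimpleGraph.neighborFinset_eq_filter]; exact hdeg w
    show (∑ v : α, if G.Adj v w then f w else 0) = 3 * f w
    rw [← Finset.sum_filter, Finset.sum_const, hdv, smul_eq_mul, mul_comm]
  set T : ℕ := ∑ p ∈ AP, hammingDist (x p.1) (x p.2) with hTdef
  have hTle : T ≤ 6 * 2^d := by
    have h1 : T ≤ ∑ p ∈ AP, ((bF p.1).card + (bF p.2).card) := by
      apply Finset.sum_le_sum
      intro p hp
      rw [hAPdef, mem_filter] at hp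
      exact hedge p.1 p.2 hp.2
    have h2 : ∑ p ∈ AP, ((bF p.1).card + (bF p.2).card)
        = ∑ p ∈ AP, (bF p.1).card + ∑ p ∈ AP, (bF p.2).card := Finset.sum_add_distrib
    have h3 := hsplit1 (fun v => (bF v).card)
    have h4 := hsplit2 (fun v => (bF v).card)
    have h5 : ∑ v, 3 * (bF v).card = 3 * ∑ v, (bF v).card := by rw [Finset.mul_sum]
    omega
  -- coordinate decomposition
  have hcoords : ∀ (Q : Finset (α × α)), ∑ p ∈ Q, hammingDist (x p.1) (x p.2)
      = ∑ i : Fin d, (Q.filter (fun p => x p.1 i ≠ x p.2 i)).card := by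
    intro Q
    calc ∑ p ∈ Q, hammingDist (x p.1) (x p.2)
        = ∑ p ∈ Q, ∑ i : Fin d, (if x p.1 i ≠ x p.2 i then 1 else 0) :=
          Finset.sum_congr rfl fun p _ => Finset.card_filter _ _
      _ = ∑ i : Fin d, ∑ p ∈ Q, (if x p.1 i ≠ x p.2 i then 1 else 0) := Finset.sum_comm
      _ = _ := Finset.sum_congr rfl fun i _ => (Finset.card_filter _ _).symm
  set cc : Fin d → ℕ := fun i => (AP.filter (fun p => x p.1 i ≠ x p.2 i)).card with hccdef
  have hTcoord : T = ∑ i, cc i := hcoords AP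
  -- coordinate majority sets
  set S : Fin d → Finset α := fun i => univ.filter (fun v => x v i = true) with hSdef
  set F : Fin d → Finset α := fun i => if (S i).card ≤ n then S i else (S i)ᶜ with hFdef
  have hmemS : ∀ i (u : α), u ∈ S i ↔ x u i = true := by
    intro i u; rw [hSdef]; simp
  have hFn : ∀ i, (F i).card ≤ n := by
    intro i
    simp only [hFdef]
    split_ifs with hc
    · exact hc
    · rw [Finset.card_compl, hcard]; omega
  have hFcross : ∀ i v w, v ∈ F i → w ∉ F i → x v i ≠ x w i := by
    intro i v w hv hw
    simp only [hFdef] at hv hw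
    split_ifs at hv hw with hc
    · rw [hmemS i v] at hv
      rw [hmemS i w] at hw
      rw [hv, Bool.not_eq_true] at *
      rw [hw]; simp
    · rw [Finset.mem_compl, hmemS i v, Bool.not_eq_true] at hv
      rw [Finset.mem_compl, not_not, hmemS i w] at hw
      rw [hv, hw]; simp
  have hFS : ∀ i, (F i).card * ((F i)ᶜ).card = (S i).card * ((S i)ᶜ).card := by
    intro i
    simp only [hFdef]
    split_ifs with hc
    · rfl
    · rw [compl_compl, mul_comm]
  -- expansion per coordinate
  have hcc : ∀ i, (0.36:ℝ) * ((F i).card:ℝ) ≤ (cc i : ℝ) := by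
    intro i
    have hFn_i : Nat.card ↥((F i : Set α)) ≤ n := by
      rw [Nat.card_coe_set_eq, Set.ncard_coe_finset]; exact hFn i
    have hEx := hexp (↑(F i)) hFn_i
    set Eset := extNbhd G (↑(F i) : Set α) with hEdef
    set E : Finset α := (Set.toFinite Eset).toFinset with hEF
    have hEcard : (Nat.card ↥Eset : ℝ) = (E.card : ℝ) := by
      rw [Nat.card_eq_card_finite_toFinset (Set.toFinite Eset)]
    have hpickex : ∀ w ∈ E, ∃ v, v ∈ F i ∧ G.Adj v w := by
      intro w hw
      rw [hEF, Set.Finite.mem_toFinset] at hw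
      obtain ⟨-, v, hv, hadj⟩ := hw
      exact ⟨v, hv, hadj⟩
    set pk : α → α := fun w => if h : ∃ v, v ∈ F i ∧ G.Adj v w then h.choose else w with hpk
    have hpk1 : ∀ w ∈ E, pk w ∈ F i ∧ G.Adj (pk w) w := by
      intro w hw
      have h := hpickex w hw
      rw [hpk]
      simp only [dif_pos h]
      exact h.choose_spec
    have hwE : ∀ w ∈ E, w ∉ F i := by
      intro w hw
      rw [hEF, Set.Finite.mem_toFinset] at hw
      exact fun hmem => hw.1 (Finset.mem_coe.mpr hmem)
    set I1 := E.image (fun w => (pk w, w)) with hI1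
    set I2 := E.image (fun w => (w, pk w)) with hI2
    have hI1card : I1.card = E.card :=
      Finset.card_image_of_injOn (fun a _ b _ hab => (Prod.ext_iff.mp hab).2)
    have hI2card : I2.card = E.card :=
      Finset.card_image_of_injOn (fun a _ b _ hab => (Prod.ext_iff.mp hab).1)
    have hsub : I1 ∪ I2 ⊆ AP.filter (fun p => x p.1 i ≠ x p.2 i) := by
      intro p hp
      rw [Finset.mem_union] at hp
      rcases hp with hp | hp
      · rw [hI1, Finset.mem_image] at hp
        obtain ⟨w, hw, rfl⟩ := hp
        obtain ⟨hmem, hadj⟩ := hpk1 w hw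
        refine Finset.mem_filter.mpr ⟨Finset.mem_filter.mpr ⟨mem_univ _, hadj⟩, ?_⟩
        exact hFcross i _ _ hmem (hwE w hw)
      · rw [hI2, Finset.mem_image] at hp
        obtain ⟨w, hw, rfl⟩ := hp
        obtain ⟨hmem, hadj⟩ := hpk1 w hw
        refine Finset.mem_filter.mpr ⟨Finset.mem_filter.mpr ⟨mem_univ _, hadj.symm⟩, ?_⟩
        exact (hFcross i _ _ hmem (hwE w hw)).symm
    have hdisj12 : Disjoint I1 I2 := by
      rw [Finset.disjoint_left]
      intro p hp1 hp2
      rw [hI1, Finset.mem_image] at hp1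
      obtain ⟨w, hw, hwp⟩ := hp1
      rw [hI2, Finset.mem_image] at hp2
      obtain ⟨w', hw', hwp'⟩ := hp2
      have h1 : p.1 ∈ F i := by rw [← hwp]; exact (hpk1 w hw).1
      have h2 : p.1 ∉ F i := by rw [← hwp']; exact hwE w' hw'
      exact h2 h1
    have hcount : 2 * E.card ≤ cc i := by
      have h := Finset.card_le_card hsub
      rw [Finset.card_union_of_disjoint hdisj12, hI1card, hI2card] at h
      show 2 * E.card ≤ (AP.filter (fun p => x p.1 i ≠ x p.2 i)).card
      omega
    have hE18 : (0.18:ℝ) * ((F i).card:ℝ) ≤ (E.card : ℝ) := by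
      rw [← hEcard]
      have : (Nat.card ↥((F i : Set α)) : ℝ) = ((F i).card : ℝ) := by
        rw [Nat.card_coe_set_eq, Set.ncard_coe_finset]
      rw [← this]
      exact hEx
    have hcount' : (2:ℝ) * (E.card:ℝ) ≤ (cc i : ℝ) := by exact_mod_cast hcount
    nlinarith
  -- pair sums
  set P : ℕ := ∑ p : α × α, hammingDist (x p.1) (x p.2) with hPdef
  have hPcoord : P = ∑ i, ((univ : Finset (α × α)).filter
      (fun p => x p.1 i ≠ x p.2 i)).card := hcoords univ
  have hprodS : ∀ i, ((univ : Finset (α × α)).filter (fun p => x p.1 i ≠ x p.2 i)).card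
      ≤ 2 * ((S i).card * ((S i)ᶜ).card) := by
    intro i
    have hsub : ((univ : Finset (α × α)).filter (fun p => x p.1 i ≠ x p.2 i))
        ⊆ (S i ×ˢ (S i)ᶜ) ∪ ((S i)ᶜ ×ˢ S i) := by
      intro p hp
      rw [mem_filter] at hp
      have hp2 := hp.2
      rw [Finset.mem_union, Finset.mem_product, Finset.mem_product]
      rcases Bool.eq_false_or_eq_true (x p.1 i) with h1 | h1
      · left
        refine ⟨(hmemS i p.1).mpr h1, Finset.mem_compl.mpr ?_⟩
        rw [hmemS i p.2]
        intro h2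
        exact hp2 (h1.trans h2.symm)
      · right
        refine ⟨Finset.mem_compl.mpr ?_, (hmemS i p.2).mpr ?_⟩
        · rw [hmemS i p.1, h1]; simp
        · rcases Bool.eq_false_or_eq_true (x p.2 i) with h2 | h2
          · exact h2
          · exact absurd (h1.trans h2.symm) hp2

    calc _ ≤ ((S i ×ˢ (S i)ᶜ) ∪ ((S i)ᶜ ×ˢ S i)).card := Finset.card_le_card hsub
      _ ≤ (S i ×ˢ (S i)ᶜ).card + ((S i)ᶜ ×ˢ S i).card := Finset.card_union_le _ _
      _ = 2 * ((S i).card * ((S i)ᶜ).card) := by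
          rw [Finset.card_product, Finset.card_product]; ring
  -- radius and volume
  set r : ℕ := 12*d/25 with hrdef
  set V : ℕ := ∑ j ∈ range (r+1), d.choose j with hVdef
  have hVd : (V:ℝ) * d ≤ 0.45 * 2^d := hD0 d (le_trans (le_max_left _ _) hd)
  have hVn : (V:ℝ) ≤ 0.02 * n := by
    have h1 : (V:ℝ) * d ≤ 0.45 * ((2*n) * d / 45) := by
      nlinarith
    have h2 : (0.45:ℝ) * ((2*n) * d / 45) = 0.02 * n * d := by ring
    rw [h2] at h1
    have := (mul_le_mul_iff_of_pos_right hdpos).mp h1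
    linarith
  have hV2n : V ≤ 2*n := by
    have : (V:ℝ) ≤ 2*n := by linarith
    exact_mod_cast this
  -- lower bound on P
  have hPlow : (2*(n:ℝ)) * ((2*n - V) * (r+1)) ≤ (P:ℝ) := by
    have hper : ∀ u : α, (2*(n:ℝ) - V) * (r+1) ≤ ∑ v, (hammingDist (x u) (x v) : ℝ) := by
      intro u
      set C : Finset α := univ.filter (fun v => hammingDist (x u) (x v) ≤ r) with hCdef
      have hC : C.card ≤ V := ball_bound x hxinj (x u) r
      have hsum1 : (Cᶜ.card) * (r+1) ≤ ∑ v ∈ Cᶜ, hammingDist (x u) (x v) := by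
        calc Cᶜ.card * (r+1) = Cᶜ.card • (r+1) := by simp
          _ ≤ _ := Finset.card_nsmul_le_sum _ _ _ (by
              intro v hv
              rw [Finset.mem_compl, hCdef, mem_filter] at hv
              push_neg at hv
              have := hv (mem_univ v)
              omega)
      have hsum2 : ∑ v ∈ Cᶜ, hammingDist (x u) (x v) ≤ ∑ v, hammingDist (x u) (x v) :=
        Finset.sum_le_sum_of_subset (Finset.subset_univ _)
      have hccard : (Cᶜ.card : ℝ) = 2*n - C.card := by
        rw [Finset.card_compl, hcard]
        rw [Nat.cast_sub (by rw [← hcard]; exact Finset.card_le_univ _)]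
        push_cast; ring
      have hchain : (2*(n:ℝ) - V) * (r+1) ≤ (Cᶜ.card : ℝ) * (r+1) := by
        apply mul_le_mul_of_nonneg_right _ (by positivity)
        rw [hccard]
        have : (C.card:ℝ) ≤ V := by exact_mod_cast hC
        linarith
      calc (2*(n:ℝ) - V) * (r+1) ≤ (Cᶜ.card : ℝ) * (r+1) := hchain
        _ ≤ ∑ v ∈ Cᶜ, (hammingDist (x u) (x v) : ℝ) := by exact_mod_cast hsum1
        _ ≤ ∑ v, (hammingDist (x u) (x v) : ℝ) := by exact_mod_cast hsum2
    have hPsplit : (P:ℝ) = ∑ u, ∑ v, (hammingDist (x u) (x v) : ℝ) := by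
      rw [hPdef]
      push_cast
      rw [Fintype.sum_prod_type]
    rw [hPsplit]
    calc (2*(n:ℝ)) * ((2*n - V) * (r+1))
        = ∑ _u : α, ((2*(n:ℝ) - V) * (r+1)) := by
          rw [Finset.sum_const, Finset.card_univ, hcard]; push_cast; ring
      _ ≤ _ := Finset.sum_le_sum (fun u _ => hper u)
  -- assemble: sum over coordinates of m_i * m'_i
  have hsum_mm : (n:ℝ) * ((2*n - V) * (r+1)) ≤ ∑ i, ((F i).card : ℝ) * (((F i)ᶜ).card : ℝ) := by
    have h1 : (P:ℝ) ≤ ∑ i, 2 * (((F i).card : ℝ) * (((F i)ᶜ).card : ℝ)) := by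
      rw [hPcoord]
      push_cast
      apply Finset.sum_le_sum
      intro i _
      have := hprodS i
      have h2 := hFS i
      have : ((univ : Finset (α × α)).filter (fun p => x p.1 i ≠ x p.2 i)).card
          ≤ 2 * ((F i).card * ((F i)ᶜ).card) := by rw [h2]; exact this
      exact_mod_cast this
    have h3 : ∑ i, 2 * (((F i).card : ℝ) * (((F i)ᶜ).card : ℝ))
        = 2 * ∑ i, ((F i).card : ℝ) * (((F i)ᶜ).card : ℝ) := by
      rw [Finset.mul_sum]
    rw [h3] at h1
    linarith
  -- identities and Cauchy-Schwarz
  have hcompl : ∀ i, ((F i)ᶜ.card : ℝ) = 2*n - (F i).card := by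
    intro i
    rw [Finset.card_compl, hcard, Nat.cast_sub (by rw [← hcard]; exact Finset.card_le_univ _)]
    push_cast; ring
  have hmm_id : ∀ i, ((F i).card : ℝ) * (((F i)ᶜ).card : ℝ)
      = (n:ℝ)^2 - ((n:ℝ) - (F i).card)^2 := by
    intro i
    rw [hcompl i]; ring
  have hr1 : (12/25:ℝ) * d ≤ (r:ℝ) + 1 := by
    have : 12*d < 25*(r+1) := by omega
    have h := this
    have : (12*(d:ℝ)) < 25*((r:ℝ)+1) := by exact_mod_cast this
    linarith
  have hVfac : (1.98:ℝ)*n ≤ 2*n - V := by linarith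
  have hbig : (0.9504:ℝ) * n^2 * d ≤ ∑ i, ((F i).card : ℝ) * (((F i)ᶜ).card : ℝ) := by
    have h1 : (n:ℝ) * ((1.98*n) * ((12/25)*d)) ≤ (n:ℝ) * ((2*n - V) * (r+1)) := by
      apply mul_le_mul_of_nonneg_left _ (le_of_lt hnpos)
      apply mul_le_mul hVfac hr1 (by positivity) (by linarith)
    calc (0.9504:ℝ) * n^2 * d = (n:ℝ) * ((1.98*n) * ((12/25)*d)) := by ring
      _ ≤ _ := h1
      _ ≤ _ := hsum_mm
  have hsumsq : ∑ i, ((n:ℝ) - (F i).card)^2 ≤ 0.0496 * n^2 * d := by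
    have h1 : ∑ i, (((n:ℝ))^2 - ((n:ℝ) - (F i).card)^2)
        = ∑ i, ((F i).card : ℝ) * (((F i)ᶜ).card : ℝ) :=
      Finset.sum_congr rfl fun i _ => (hmm_id i).symm
    have h2 : ∑ i, (((n:ℝ))^2 - ((n:ℝ) - (F i).card)^2)
        = (d:ℝ)*n^2 - ∑ i, ((n:ℝ) - (F i).card)^2 := by
      rw [Finset.sum_sub_distrib, Finset.sum_const, Finset.card_univ, Fintype.card_fin,
        nsmul_eq_mul]
    have h4 : (d:ℝ)*n^2 = n^2*d := by ring
    nlinarith [hbig, h1, h2, h4]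
  have hCS : (∑ i, ((n:ℝ) - (F i).card))^2 ≤ (d:ℝ) * ∑ i, ((n:ℝ) - (F i).card)^2 := by
    have := sq_sum_le_card_mul_sum_sq (s := (univ : Finset (Fin d)))
      (f := fun i => (n:ℝ) - (F i).card)
    simpa using this
  have hUle : ∑ i, ((n:ℝ) - (F i).card) ≤ 0.223 * n * d := by
    apply le_of_pow_le_pow_left₀ (n := 2) two_ne_zero (by positivity)
    calc (∑ i, ((n:ℝ) - (F i).card))^2 ≤ (d:ℝ) * ∑ i, ((n:ℝ) - (F i).card)^2 := hCS
      _ ≤ (d:ℝ) * (0.0496 * n^2 * d) := by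
          apply mul_le_mul_of_nonneg_left hsumsq (by positivity)
      _ ≤ (0.223 * n * d)^2 := by nlinarith
  have hMlow : (0.777:ℝ) * n * d ≤ ∑ i, ((F i).card : ℝ) := by
    have h1 : ∑ i, ((n:ℝ) - (F i).card) = (d:ℝ)*n - ∑ i, ((F i).card : ℝ) := by
      rw [Finset.sum_sub_distrib, Finset.sum_const, Finset.card_univ]
      simp
    rw [h1] at hUle
    nlinarith
  -- final contradiction
  have hTreal : (0.36:ℝ) * (0.777 * n * d) ≤ (T:ℝ) := by
    calc (0.36:ℝ) * (0.777 * n * d) ≤ 0.36 * ∑ i, ((F i).card : ℝ) := by nlinarith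
      _ = ∑ i, 0.36 * ((F i).card : ℝ) := by rw [Finset.mul_sum]
      _ ≤ ∑ i, (cc i : ℝ) := Finset.sum_le_sum fun i _ => hcc i
      _ = (T:ℝ) := by rw [hTcoord]; push_cast; ring
  have hTup : (T:ℝ) ≤ 6 * ((2*n) * d / 45) := by
    have h1 : (T:ℝ) ≤ 6 * 2^d := by exact_mod_cast hTle
    nlinarith
  nlinarith [mul_pos hnpos hdpos]
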